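/- Let X = (I,P) be a probabilistic coherence space. Then the function d_X(x,y) = ‖x−(x∧y)‖_X + ‖y−(x∧y)‖_X is a metric on P: it is nonnegative, symmetric, vanishes exactly when x = y, and satisfies the triangle inequality d_X(x,z) ≤ d_X(x,y) + d_X(y,z) for all x,y,z ∈ P. -/

import Mathlib

open scoped ENNReal NNReal

noncomputable section

/-- ⟨u,u'⟩ = Σ_i u_i u'_i in [0,∞]. -/
def dotE {I : Type*} (u v : I → ℝ≥0∞) : ℝ≥0∞ := ∑' i, u i * v i

/-- The orthogonal P⊥ of a set P ⊆ [0,∞]^I. -/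
def orthE {I : Type*} (P : Set (I → ℝ≥0∞)) : Set (I → ℝ≥0∞) :=
  {v | ∀ u ∈ P, dotE u v ≤ 1}

/-- (I,P) is a probabilistic coherence space. -/
structure IsPCS {I : Type*} (P : Set (I → ℝ≥0∞)) : Prop where
  biorth : orthE (orthE P) = P
  nonzero : ∀ a, ∃ x ∈ P, 0 < x a
  bounded : ∀ a, ∃ m : ℝ≥0, ∀ x ∈ P, x a ≤ (m : ℝ≥0∞)

/-- The norm ‖x‖_X = inf{r > 0 | x ∈ rP}. -/
def pnorm {I : Type*} (P : Set (I → ℝ≥0∞)) (x : I → ℝ≥0∞) : ℝ≥0∞ :=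
  sInf {r : ℝ≥0∞ | 0 < r ∧ ∃ z ∈ P, x = r • z}

section aux
variable {I : Type*} {P : Set (I → ℝ≥0∞)}

lemma dotE_mono {u v w : I → ℝ≥0∞} (h : u ≤ v) : dotE w u ≤ dotE w v :=
  ENNReal.tsum_le_tsum fun i => mul_le_mul_right (h i) _

lemma zero_mem' (hP : IsPCS P) : (0 : I → ℝ≥0∞) ∈ P := by
  rw [← hP.biorth]
  intro u hu
  simp [dotE]

lemma mem_of_le' (hP : IsPCS P) {u v : I → ℝ≥0∞} (h : u ≤ v) (hv : v ∈ P) : u ∈ P := by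
  rw [← hP.biorth] at hv ⊢
  exact fun w hw => (dotE_mono h).trans (hv w hw)

lemma pnorm_zero' (hP : IsPCS P) : pnorm P (0 : I → ℝ≥0∞) = 0 := by
  refine le_antisymm ?_ zero_le
  refine ENNReal.le_of_forall_pos_le_add fun ε hε _ => ?_
  rw [zero_add]
  exact sInf_le ⟨by exact_mod_cast hε, 0, zero_mem' hP, by simp⟩

lemma eq_zero_of_pnorm_eq_zero (hP : IsPCS P) {u : I → ℝ≥0∞}
    (h : pnorm P u = 0) : u = 0 := by
  funext a
  obtain ⟨m, hm⟩ := hP.bounded a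
  simp only [Pi.zero_apply]
  refine le_antisymm ?_ zero_le
  refine ENNReal.le_of_forall_pos_le_add fun ε hε _ => ?_
  rw [zero_add]
  rcases eq_or_ne (m : ℝ≥0∞) 0 with hm0 | hm0
  · have hne : {r : ℝ≥0∞ | 0 < r ∧ ∃ z ∈ P, u = r • z}.Nonempty := by
      by_contra hc
      rw [Set.not_nonempty_iff_eq_empty] at hc
      rw [pnorm, hc, sInf_empty] at h
      exact (ENNReal.top_ne_zero h)
    obtain ⟨r, hr0, z, hz, hu⟩ := hne
    have : u a = r * z a := by rw [hu]; simp [Pi.smul_apply, smul_eq_mul]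
    rw [this]
    calc r * z a ≤ r * m := mul_le_mul_right (hm z hz) r
    _ = 0 := by rw [hm0, mul_zero]
    _ ≤ ε := zero_le
  · have hεm : (0:ℝ≥0∞) < ε / m := ENNReal.div_pos (by exact_mod_cast hε.ne') (ENNReal.coe_ne_top)
    have : pnorm P u < ε / m := h ▸ hεm
    rw [pnorm, sInf_lt_iff] at this
    obtain ⟨r, ⟨hr0, z, hz, hu⟩, hrε⟩ := this
    have hua : u a = r * z a := by rw [hu]; simp [Pi.smul_apply, smul_eq_mul]
    rw [hua]
    calc r * z a ≤ r * m := mul_le_mul_right (hm z hz) r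
    _ ≤ (ε / m) * m := mul_le_mul_left hrε.le _
    _ = ε := ENNReal.div_mul_cancel hm0 ENNReal.coe_ne_top

lemma pnorm_mono' (hP : IsPCS P) {u v : I → ℝ≥0∞} (h : u ≤ v) :
    pnorm P u ≤ pnorm P v := by
  refine le_sInf fun r hr => ?_
  obtain ⟨hr0, z, hz, hv⟩ := hr
  rcases eq_or_ne r ∞ with rfl | hrt
  · exact le_top
  have hva : ∀ a, v a = r * z a := fun a => by rw [hv]; simp [Pi.smul_apply, smul_eq_mul]
  refine sInf_le ⟨hr0, fun a => u a / r, mem_of_le' hP (fun a => ?_) hz, funext fun a => ?_⟩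
  · calc u a / r ≤ v a / r := ENNReal.div_le_div_right (h a) r
    _ = z a := by rw [hva a, mul_comm, mul_div_assoc, ENNReal.div_self hr0.ne' hrt, mul_one]
  · simp only [Pi.smul_apply, smul_eq_mul]
    rw [ENNReal.mul_div_cancel hr0.ne' hrt]

lemma pnorm_add' (hP : IsPCS P) (u v : I → ℝ≥0∞) :
    pnorm P (u + v) ≤ pnorm P u + pnorm P v := by
  rw [pnorm, pnorm, ENNReal.sInf_add]
  refine le_iInf₂ fun r hr => ?_
  rw [add_comm r, pnorm, ENNReal.sInf_add]
  refine le_iInf₂ fun s hs => ?_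
  rw [add_comm s r]
  obtain ⟨hr0, z, hz, hu⟩ := hr
  obtain ⟨hs0, w, hw, hv⟩ := hs
  rcases eq_or_ne (r + s) ∞ with hrs | hrs
  · rw [hrs]; exact le_top
  have hrs0 : r + s ≠ 0 := fun hc => hr0.ne' (add_eq_zero.mp hc).1
  have hua : ∀ a, u a = r * z a := fun a => by rw [hu]; simp [Pi.smul_apply, smul_eq_mul]
  have hva : ∀ a, v a = s * w a := fun a => by rw [hv]; simp [Pi.smul_apply, smul_eq_mul]
  refine sInf_le ⟨zero_lt_iff.mpr hrs0, fun a => (u a + v a) / (r + s), ?_, funext fun a => ?_⟩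
  · rw [← hP.biorth]
    intro f hf
    have hdz : dotE f z ≤ 1 := by
      have := hf z hz
      rw [dotE] at this ⊢
      simpa [mul_comm] using this
    have hdw : dotE f w ≤ 1 := by
      have := hf w hw
      rw [dotE] at this ⊢
      simpa [mul_comm] using this
    have key : dotE f (fun a => (u a + v a) / (r + s))
        = (r * dotE f z + s * dotE f w) * (r + s)⁻¹ := by
      rw [dotE]
      have : ∀ a, f a * ((u a + v a) / (r + s))
          = (r * (f a * z a) + s * (f a * w a)) * (r + s)⁻¹ := by
        intro a
        rw [hua a, hva a, div_eq_mul_inv]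
        ring
      simp_rw [this]
      rw [ENNReal.tsum_mul_right, ENNReal.tsum_add, ENNReal.tsum_mul_left,
        ENNReal.tsum_mul_left, dotE, dotE]
    rw [key]
    calc (r * dotE f z + s * dotE f w) * (r + s)⁻¹
        ≤ (r * 1 + s * 1) * (r + s)⁻¹ := by
          gcongr
    _ = (r + s) * (r + s)⁻¹ := by rw [mul_one, mul_one]
    _ = 1 := ENNReal.mul_inv_cancel hrs0 hrs
  · simp only [Pi.smul_apply, smul_eq_mul, Pi.add_apply]
    rw [ENNReal.mul_div_cancel hrs0 hrs]

lemma tsub_inf' (p q : ℝ≥0∞) : p - p ⊓ q = p - q := by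
  rcases le_total p q with h | h
  · rw [inf_eq_left.mpr h, tsub_self, tsub_eq_zero_of_le h]
  · rw [inf_eq_right.mpr h]

lemma scalar_tri (a b c : ℝ≥0∞) : a - a ⊓ c ≤ (a - a ⊓ b) + (b - b ⊓ c) := by
  rw [tsub_inf', tsub_inf', tsub_inf']
  exact tsub_le_tsub_add_tsub

end aux

/-- The distance d_X(x,y) = ‖x−(x∧y)‖_X + ‖y−(x∧y)‖_X. -/
def distX {I : Type*} (P : Set (I → ℝ≥0∞)) (x y : I → ℝ≥0∞) : ℝ≥0∞ :=
  pnorm P (x - x ⊓ y) + pnorm P (y - x ⊓ y)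

/-- d_X is a metric on P: nonnegative, symmetric, it vanishes exactly on the diagonal,
and it satisfies the triangle inequality. -/
theorem stmt4 {I : Type*} [Countable I] (P : Set (I → ℝ≥0∞)) (hP : IsPCS P) :
    (∀ x ∈ P, ∀ y ∈ P, 0 ≤ distX P x y) ∧
    (∀ x ∈ P, ∀ y ∈ P, distX P x y = distX P y x) ∧
    (∀ x ∈ P, ∀ y ∈ P, (distX P x y = 0 ↔ x = y)) ∧
    (∀ x ∈ P, ∀ y ∈ P, ∀ z ∈ P, distX P x z ≤ distX P x y + distX P y z) := by
  refine ⟨fun x _ y _ => zero_le, ?_, ?_, ?_⟩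
  · intro x _ y _
    rw [distX, distX, inf_comm y x, add_comm]
  · intro x hx y hy
    constructor
    · intro h
      rw [distX, add_eq_zero] at h
      have h1 := eq_zero_of_pnorm_eq_zero hP h.1
      have h2 := eq_zero_of_pnorm_eq_zero hP h.2
      funext a
      have l1 : x a ≤ y a := by
        have := congrFun h1 a
        simp only [Pi.sub_apply, Pi.inf_apply, Pi.zero_apply, tsub_eq_zero_iff_le,
          le_inf_iff] at this
        exact this.2
      have l2 : y a ≤ x a := by
        have := congrFun h2 a
        simp only [Pi.sub_apply, Pi.inf_apply, Pi.zero_apply, tsub_eq_zero_iff_le,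
          le_inf_iff] at this
        exact this.1
      exact le_antisymm l1 l2
    · rintro rfl
      have hxx : x - x ⊓ x = 0 := by
        funext a
        simp [Pi.sub_apply, Pi.inf_apply]
      rw [distX, hxx, pnorm_zero' hP, add_zero]
  · intro x hx y hy z hz
    have key : ∀ a b c : I → ℝ≥0∞, a - a ⊓ c ≤ (a - a ⊓ b) + (b - b ⊓ c) := by
      intro a b c i
      simpa [Pi.sub_apply, Pi.inf_apply, Pi.add_apply] using scalar_tri (a i) (b i) (c i)
    have h1 : pnorm P (x - x ⊓ z) ≤ pnorm P (x - x ⊓ y) + pnorm P (y - y ⊓ z) :=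
      (pnorm_mono' hP (key x y z)).trans (pnorm_add' hP _ _)
    have h2 : pnorm P (z - x ⊓ z) ≤ pnorm P (z - z ⊓ y) + pnorm P (y - y ⊓ x) := by
      have h := (pnorm_mono' hP (key z y x)).trans (pnorm_add' hP _ _)
      rwa [inf_comm z x] at h
    rw [distX, distX, distX]
    calc pnorm P (x - x ⊓ z) + pnorm P (z - x ⊓ z)
        ≤ (pnorm P (x - x ⊓ y) + pnorm P (y - y ⊓ z))
          + (pnorm P (z - z ⊓ y) + pnorm P (y - y ⊓ x)) := add_le_add h1 h2
      _ = pnorm P (x - x ⊓ y) + pnorm P (y - x ⊓ y)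
          + (pnorm P (y - y ⊓ z) + pnorm P (z - y ⊓ z)) := by
            rw [inf_comm x y, inf_comm y z]; ring
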